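/- Let B : ℝ → ℝ be twice differentiable and let E, G, M, N : ℝ → ℝ be differentiable functions satisfying (with ′ the ordinary derivative) E′ = M − EG, M′ = E² + MG − BM − EN, G′ = GB + N − E − G², N′ = GE − M, together with the constraint N = −E. Then G is three times differentiable and satisfies G‴ + 2G²G′ + 4(G′)² + 2GG″ − 2G′Φ − GΦ′ = 0, where Φ = B′ + (1/2)B². -/

import Mathlib

/-- If `B` is twice differentiable, `E, G, M, N` are differentiable
and solve the system (49) with `C = 1` in the variable `y` (ordinary derivative),
together with the constraint `N = −E`, then `G` is three times differentiable and
satisfies `G‴ + 2G²G′ + 4(G′)² + 2GG″ − 2G′Φ − GΦ′ = 0` with `Φ = B′ + (1/2)B²`. -/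
theorem stmt_9 (B E G M N : ℝ → ℝ)
    (hB : Differentiable ℝ B) (hB' : Differentiable ℝ (deriv B))
    (hE : Differentiable ℝ E) (hG : Differentiable ℝ G)
    (hM : Differentiable ℝ M) (hN : Differentiable ℝ N)
    (hsys : ∀ y : ℝ,
      deriv E y = M y - E y * G y ∧
      deriv M y = E y ^ 2 + M y * G y - B y * M y - E y * N y ∧
      deriv G y = G y * B y + N y - E y - G y ^ 2 ∧
      deriv N y = G y * E y - M y)
    (hconstr : ∀ y : ℝ, N y = -E y) :
    Differentiable ℝ (deriv G) ∧ Differentiable ℝ (deriv (deriv G)) ∧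
    ∀ y : ℝ,
      deriv (deriv (deriv G)) y + 2 * G y ^ 2 * deriv G y + 4 * (deriv G y) ^ 2
        + 2 * G y * deriv (deriv G) y
        - 2 * deriv G y * (deriv B y + (1/2) * B y ^ 2)
        - G y * deriv (fun t => deriv B t + (1/2) * B t ^ 2) y = 0 := by
  have hBy : ∀ y, HasDerivAt B (deriv B y) y := fun y => hB.differentiableAt.hasDerivAt
  have hB1y : ∀ y, HasDerivAt (deriv B) (deriv (deriv B) y) y :=
    fun y => hB'.differentiableAt.hasDerivAt
  have hEy : ∀ y, HasDerivAt E (M y - E y * G y) y :=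
    fun y => (hsys y).1 ▸ hE.differentiableAt.hasDerivAt
  have hGy : ∀ y, HasDerivAt G (G y * B y + N y - E y - G y ^ 2) y :=
    fun y => (hsys y).2.2.1 ▸ hG.differentiableAt.hasDerivAt
  have hMy : ∀ y, HasDerivAt M (E y ^ 2 + M y * G y - B y * M y - E y * N y) y :=
    fun y => (hsys y).2.1 ▸ hM.differentiableAt.hasDerivAt
  have hNy : ∀ y, HasDerivAt N (G y * E y - M y) y :=
    fun y => (hsys y).2.2.2 ▸ hN.differentiableAt.hasDerivAt
  have hg1 : deriv G = fun t => G t * B t + N t - E t - G t ^ 2 :=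
    funext fun y => (hsys y).2.2.1
  -- second derivative
  have h2 : ∀ y, HasDerivAt (fun t => G t * B t + N t - E t - G t ^ 2)
      ((G y * B y - 2 * E y - G y ^ 2) * B y + G y * deriv B y + 2 * E y * G y - 2 * M y
        - 2 * G y * (G y * B y - 2 * E y - G y ^ 2)) y := by
    intro y
    have h2' := ((((hGy y).mul (hBy y)).add (hNy y)).sub (hEy y)).sub ((hGy y).pow 2)
    refine h2'.congr_deriv ?_
    rw [hconstr y]
    simp only [Nat.cast_ofNat, Nat.reduceSub]
    ring
  have h2G : ∀ y, HasDerivAt (deriv G)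
      ((G y * B y - 2 * E y - G y ^ 2) * B y + G y * deriv B y + 2 * E y * G y - 2 * M y
        - 2 * G y * (G y * B y - 2 * E y - G y ^ 2)) y := fun y => hg1 ▸ h2 y
  have hdiff2 : Differentiable ℝ (deriv G) := fun y => (h2G y).differentiableAt
  have hg2 : deriv (deriv G) = fun t =>
      (G t * B t - 2 * E t - G t ^ 2) * B t + G t * deriv B t + 2 * E t * G t - 2 * M t
        - 2 * G t * (G t * B t - 2 * E t - G t ^ 2) :=
    funext fun y => (h2G y).deriv
  -- third derivative
  have hA : ∀ y, HasDerivAt (fun t => G t * B t - 2 * E t - G t ^ 2)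
      ((G y * B y + N y - E y - G y ^ 2) * B y + G y * deriv B y
        - 2 * (M y - E y * G y)
        - 2 * G y ^ 1 * (G y * B y + N y - E y - G y ^ 2)) y := by
    intro y
    have := (((hGy y).mul (hBy y)).sub ((hEy y).const_mul 2)).sub ((hGy y).pow 2)
    refine this.congr_deriv ?_
    simp only [Nat.cast_ofNat, Nat.reduceSub]
    try ring
  have h3 : ∀ y, HasDerivAt (fun t =>
      (G t * B t - 2 * E t - G t ^ 2) * B t + G t * deriv B t + 2 * E t * G t - 2 * M t
        - 2 * G t * (G t * B t - 2 * E t - G t ^ 2))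
      (((G y * B y + N y - E y - G y ^ 2) * B y + G y * deriv B y
          - 2 * (M y - E y * G y)
          - 2 * G y ^ 1 * (G y * B y + N y - E y - G y ^ 2)) * B y
        + (G y * B y - 2 * E y - G y ^ 2) * deriv B y
        + ((G y * B y + N y - E y - G y ^ 2) * deriv B y + G y * deriv (deriv B) y)
        + (2 * (M y - E y * G y) * G y
            + 2 * E y * (G y * B y + N y - E y - G y ^ 2))
        - 2 * (E y ^ 2 + M y * G y - B y * M y - E y * N y)
        - (2 * (G y * B y + N y - E y - G y ^ 2)
              * (G y * B y - 2 * E y - G y ^ 2)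
            + 2 * G y
              * ((G y * B y + N y - E y - G y ^ 2) * B y + G y * deriv B y
                - 2 * (M y - E y * G y)
                - 2 * G y ^ 1 * (G y * B y + N y - E y - G y ^ 2)))) y := by
    intro y
    exact (((((hA y).mul (hBy y)).add ((hGy y).mul (hB1y y))).add
        (((hEy y).const_mul 2).mul (hGy y))).sub ((hMy y).const_mul 2)).sub
        (((hGy y).const_mul 2).mul (hA y))
  have h3G := fun y => hg2 ▸ h3 y
  have hdiff3 : Differentiable ℝ (deriv (deriv G)) := fun y => (h3G y).differentiableAt
  refine ⟨hdiff2, hdiff3, fun y => ?_⟩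
  have e3 := (h3G y).deriv
  have hPhi : deriv (fun t => deriv B t + (1/2) * B t ^ 2) y
      = deriv (deriv B) y + (1/2) * (2 * B y ^ 1 * deriv B y) := by
    have := (hB1y y).add (((hBy y).pow 2).const_mul (1/2 : ℝ))
    refine (this.congr_deriv ?_).deriv
    simp only [Nat.cast_ofNat, Nat.reduceSub]
    try ring
  rw [e3, hPhi, (hsys y).2.2.1]
  simp only [hg2]
  rw [hconstr y]
  ring
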